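/- Let C_X, C_Z ⊆ F₂^N be subspaces with C_X^⊥ ⊆ C_Z and C_Z^⊥ ⊆ C_X, with dim C_X = dim C_Z^⊥ + 1 (one encoded logical qubit), and let x ∈ C_Z \ C_X^⊥ and z ∈ C_X \ C_Z^⊥. Call a subset E ⊆ Fin N undecodable if some manifestation of a logical operator is fully erased, i.e. (∃ x' ∈ x + C_X^⊥, supp(x') ⊆ E) ∨ (∃ z' ∈ z + C_Z^⊥, supp(z') ⊆ E), and decodable otherwise. Then the number of decodable subsets E ⊆ Fin N is at most 2^{N−1}. Consequently, for the erasure channel with transmission probability η = 1/2 (each qubit erased independently with probability 1/2, all 2^N erasure patterns equiprobable), the logical transmission probability η_log of such an [N,1,d] CSS code is at most 1/2. -/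

import Mathlib

def pairing {N : ℕ} (u v : Fin N → ZMod 2) : ZMod 2 := ∑ i, u i * v i

lemma pairing_comm {N : ℕ} (u v : Fin N → ZMod 2) : pairing u v = pairing v u := by
  simp [pairing, mul_comm]

def dotB (N : ℕ) : LinearMap.BilinForm (ZMod 2) (Fin N → ZMod 2) :=
  LinearMap.mk₂ (ZMod 2) (fun u v => pairing u v)
    (by intros; simp [pairing, add_mul, Finset.sum_add_distrib])
    (by intros; simp [pairing, Finset.mul_sum, mul_assoc])
    (by intros; simp [pairing, mul_add, Finset.sum_add_distrib])
    (by intros; simp [pairing, Finset.mul_sum, mul_left_comm])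

@[simp] lemma dotB_apply {N : ℕ} (u v : Fin N → ZMod 2) : dotB N u v = pairing u v := rfl

lemma dotB_symm (N : ℕ) : (dotB N).IsSymm := ⟨fun u v => by
  simp [pairing_comm u v]⟩

lemma dotB_refl (N : ℕ) : (dotB N).IsRefl := (dotB_symm N).isRefl

lemma zmod2_cases (a : ZMod 2) : a = 0 ∨ a = 1 := by revert a; decide

lemma dotB_nondeg (N : ℕ) : (dotB N).Nondegenerate := by
  refine ⟨?_, ?_⟩ <;> intro u hu <;>
  funext i <;>
  have := hu (Pi.single i 1) <;>
  simpa [pairing, Pi.single_apply, mul_comm] using this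

def dualCode {N : ℕ} (C : Submodule (ZMod 2) (Fin N → ZMod 2)) :
    Submodule (ZMod 2) (Fin N → ZMod 2) where
  carrier := {u | ∀ c ∈ C, pairing u c = 0}
  add_mem' := by
    intro a b ha hb c hc
    have h : pairing (a + b) c = pairing a c + pairing b c := by
      simp [pairing, add_mul, Finset.sum_add_distrib]
    simp only [Set.mem_setOf_eq] at *
    rw [h, ha c hc, hb c hc, add_zero]
  zero_mem' := by
    intro c hc
    simp [pairing]
  smul_mem' := by
    intro r a ha c hc
    have h : pairing (r • a) c = r * pairing a c := by
      simp [pairing, Finset.mul_sum, mul_assoc]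
    simp only [Set.mem_setOf_eq] at *
    rw [h, ha c hc, mul_zero]

lemma mem_dualCode {N : ℕ} {C : Submodule (ZMod 2) (Fin N → ZMod 2)}
    {u : Fin N → ZMod 2} : u ∈ dualCode C ↔ ∀ c ∈ C, pairing u c = 0 := Iff.rfl

lemma dualCode_eq {N : ℕ} (C : Submodule (ZMod 2) (Fin N → ZMod 2)) :
    dualCode C = (dotB N).orthogonal C := by
  ext u
  constructor
  · intro h c hc
    simpa [LinearMap.BilinForm.IsOrtho, pairing_comm] using h c hc
  · intro h c hc
    have := h c hc
    simpa [LinearMap.BilinForm.IsOrtho, pairing_comm c u] using this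

lemma dual_dual {N : ℕ} (C : Submodule (ZMod 2) (Fin N → ZMod 2)) :
    dualCode (dualCode C) = C := by
  rw [dualCode_eq, dualCode_eq,
    LinearMap.BilinForm.orthogonal_orthogonal (dotB_nondeg N) (dotB_refl N)]

lemma finrank_dualCode {N : ℕ} (C : Submodule (ZMod 2) (Fin N → ZMod 2)) :
    Module.finrank (ZMod 2) (dualCode C) = N - Module.finrank (ZMod 2) C := by
  rw [dualCode_eq, LinearMap.BilinForm.finrank_orthogonal (dotB_nondeg N),
    Module.finrank_fin_fun]

def vanish {N : ℕ} (E : Set (Fin N)) : Submodule (ZMod 2) (Fin N → ZMod 2) where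
  carrier := {v | ∀ i ∈ E, v i = 0}
  add_mem' := by intro a b ha hb i hi; simp [Pi.add_apply, ha i hi, hb i hi]
  zero_mem' := by intro i _; rfl
  smul_mem' := by intro r a ha i hi; simp [Pi.smul_apply, ha i hi]

lemma key_lemma {N : ℕ} (CX CZ : Submodule (ZMod 2) (Fin N → ZMod 2))
    (h1 : dualCode CX ≤ CZ)
    (hdim : Module.finrank (ZMod 2) CX = Module.finrank (ZMod 2) (dualCode CZ) + 1)
    (x z : Fin N → ZMod 2)
    (hx : x ∈ CZ) (hx' : x ∉ dualCode CX)
    (hz : z ∈ CX) (hz' : z ∉ dualCode CZ)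
    (E : Set (Fin N))
    (hnoX : ¬ ∃ x' : Fin N → ZMod 2, x' - x ∈ dualCode CX ∧ ∀ i, x' i = 1 → i ∈ E) :
    ∃ z' : Fin N → ZMod 2, z' - z ∈ dualCode CZ ∧ ∀ i, z' i = 1 → i ∉ E := by
  by_contra hcon
  set U := dualCode CZ ⊔ vanish E with hU
  have hzU : z ∉ U := by
    intro hmem
    rw [Submodule.mem_sup] at hmem
    obtain ⟨s, hs, v, hv, hsv⟩ := hmem
    apply hcon
    refine ⟨v, ?_, ?_⟩
    · have hvz : v - z = -s := by rw [← hsv]; abel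
      rw [hvz]; exact neg_mem hs
    · intro i hi1 hiE
      have h0 := hv i hiE
      rw [h0] at hi1
      exact one_ne_zero hi1.symm
  have hz2 : z ∉ (dotB N).orthogonal ((dotB N).orthogonal U) := by
    rw [LinearMap.BilinForm.orthogonal_orthogonal (dotB_nondeg N) (dotB_refl N)]
    exact hzU
  have hex : ¬ ∀ u ∈ (dotB N).orthogonal U, (dotB N) u z = 0 := fun h => hz2 (fun u hu => h u hu)
  push_neg at hex
  obtain ⟨u, huU, huz⟩ := hex
  -- u ∈ CZ
  have huCZ : u ∈ CZ := by
    rw [← dual_dual CZ, mem_dualCode]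
    intro c hc
    have := huU c (Submodule.mem_sup_left hc)
    rw [pairing_comm]
    exact this
  -- supp u ⊆ E
  have hsupp : ∀ i, u i = 1 → i ∈ E := by
    intro i hi1
    by_contra hiE
    have hsingle : (Pi.single i 1 : Fin N → ZMod 2) ∈ vanish E := by
      intro j hj
      have : j ≠ i := fun h => hiE (h ▸ hj)
      simp [Pi.single_apply, this]
    have hz0 : pairing (Pi.single i 1 : Fin N → ZMod 2) u = 0 :=
      huU _ (Submodule.mem_sup_right hsingle)
    have h0 : pairing (Pi.single i 1 : Fin N → ZMod 2) u = u i := by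
      simp [pairing, Pi.single_apply]
    rw [h0, hi1] at hz0
    exact one_ne_zero hz0
  have huz1 : pairing u z = 1 := by
    rcases zmod2_cases (pairing u z) with h | h
    · exact absurd h huz
    · exact h
  -- the linear functional v ↦ pairing v z
  set φ : (Fin N → ZMod 2) →ₗ[ZMod 2] ZMod 2 := (dotB N).flip z with hφ
  have hφap : ∀ v, φ v = pairing v z := fun v => rfl
  have hCXle : dualCode CX ≤ CZ ⊓ LinearMap.ker φ := by
    intro c hc
    exact ⟨h1 hc, LinearMap.mem_ker.mpr (hc z hz)⟩
  -- dimension count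
  have hfCZd : Module.finrank (ZMod 2) (dualCode CZ) = N - Module.finrank (ZMod 2) CZ :=
    finrank_dualCode CZ
  have hfCXd : Module.finrank (ZMod 2) (dualCode CX) = N - Module.finrank (ZMod 2) CX :=
    finrank_dualCode CX
  have hCXle' : Module.finrank (ZMod 2) CX ≤ N := by
    simpa [Module.finrank_fin_fun] using Submodule.finrank_le CX
  have hCZle' : Module.finrank (ZMod 2) CZ ≤ N := by
    simpa [Module.finrank_fin_fun] using Submodule.finrank_le CZ
  -- ψ and its surjectivity
  set ψ := φ.domRestrict CZ with hψ
  obtain ⟨c, hcCZ, hc0⟩ : ∃ c ∈ CZ, pairing z c ≠ 0 := by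
    by_contra h
    push_neg at h
    exact hz' h
  have hc1 : φ c = 1 := by
    rw [hφap, pairing_comm]
    rcases zmod2_cases (pairing z c) with h | h
    · exact absurd h hc0
    · exact h
  have hsurj : Function.Surjective ψ := by
    intro t
    refine ⟨t • ⟨c, hcCZ⟩, ?_⟩
    have : ψ (t • ⟨c, hcCZ⟩) = t • φ c := by
      simp [hψ]
    rw [this, hc1, smul_eq_mul, mul_one]
  have hrange : LinearMap.range ψ = ⊤ := LinearMap.range_eq_top.mpr hsurj
  have hrn := LinearMap.finrank_range_add_finrank_ker ψ
  rw [hrange, finrank_top, Module.finrank_self] at hrn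
  have hkermap : Submodule.map CZ.subtype (LinearMap.ker ψ) = CZ ⊓ LinearMap.ker φ := by
    rw [hψ, LinearMap.ker_domRestrict, Submodule.map_comap_subtype]
  have hkerrank : Module.finrank (ZMod 2) (CZ ⊓ LinearMap.ker φ : Submodule (ZMod 2) _)
      = Module.finrank (ZMod 2) (LinearMap.ker ψ) := by
    rw [← hkermap, Submodule.finrank_map_subtype_eq]
  have heq : dualCode CX = CZ ⊓ LinearMap.ker φ := by
    apply Submodule.eq_of_le_of_finrank_le hCXle
    rw [hkerrank, hfCXd]
    omega
  -- pairing x z = 1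
  have hxker : φ x ≠ 0 := by
    intro h0
    exact hx' (heq ▸ (⟨hx, LinearMap.mem_ker.mpr h0⟩ : x ∈ CZ ⊓ LinearMap.ker φ))
  have hx1 : φ x = 1 := by
    rcases zmod2_cases (φ x) with h | h
    · exact absurd h hxker
    · exact h
  -- u - x is an X manifestation supported in E
  apply hnoX
  refine ⟨u, ?_, hsupp⟩
  rw [heq]
  refine ⟨sub_mem huCZ hx, LinearMap.mem_ker.mpr ?_⟩
  rw [map_sub, hx1, hφap, huz1, sub_self]

/-- An erasure pattern E is undecodable iff some manifestation of a logical operator is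
fully erased. -/
def UndecodablePattern {N : ℕ} (CX CZ : Submodule (ZMod 2) (Fin N → ZMod 2))
    (x z : Fin N → ZMod 2) (E : Set (Fin N)) : Prop :=
  (∃ x' : Fin N → ZMod 2, x' - x ∈ dualCode CX ∧ ∀ i, x' i = 1 → i ∈ E) ∨
  (∃ z' : Fin N → ZMod 2, z' - z ∈ dualCode CZ ∧ ∀ i, z' i = 1 → i ∈ E)

/-- No-cloning bound: at η = 1/2 at most half of the 2^N erasure patterns are decodable,
so the logical transmission probability of an [N,1,d] CSS code is at most 1/2. -/
theorem css_no_cloning_erasure_bound (N : ℕ)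
    (CX CZ : Submodule (ZMod 2) (Fin N → ZMod 2))
    (h1 : dualCode CX ≤ CZ) (h2 : dualCode CZ ≤ CX)
    (hdim : Module.finrank (ZMod 2) CX = Module.finrank (ZMod 2) (dualCode CZ) + 1)
    (x z : Fin N → ZMod 2)
    (hx : x ∈ CZ) (hx' : x ∉ dualCode CX)
    (hz : z ∈ CX) (hz' : z ∉ dualCode CZ) :
    Nat.card {E : Set (Fin N) | ¬ UndecodablePattern CX CZ x z E} ≤ 2 ^ (N - 1) ∧
    (Nat.card {E : Set (Fin N) | ¬ UndecodablePattern CX CZ x z E} : ℝ) / 2 ^ N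
      ≤ 1 / 2 := by
  classical
  have hN : 1 ≤ N := by
    by_contra h
    push_neg at h
    interval_cases N
    exact hx' (by
      have hx0 : x = 0 := funext fun i => Fin.elim0 i
      rw [hx0]; exact zero_mem _)
  have hcompl : ∀ E : Set (Fin N),
      ¬ UndecodablePattern CX CZ x z E → UndecodablePattern CX CZ x z Eᶜ := by
    intro E hE
    have hnoX : ¬ ∃ x' : Fin N → ZMod 2, x' - x ∈ dualCode CX ∧ ∀ i, x' i = 1 → i ∈ E :=
      fun h => hE (Or.inl h)
    obtain ⟨z', hzz, hsupp⟩ := key_lemma CX CZ h1 hdim x z hx hx' hz hz' E hnoX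
    exact Or.inr ⟨z', hzz, fun i hi => hsupp i hi⟩
  set P : Set (Fin N) → Prop := UndecodablePattern CX CZ x z with hP
  set s : Finset (Set (Fin N)) := Finset.univ.filter (fun E => ¬ P E) with hs
  set t : Finset (Set (Fin N)) := Finset.univ.filter (fun E => P E) with ht
  have hcard : Nat.card {E : Set (Fin N) | ¬ P E} = s.card := by
    rw [Nat.card_eq_fintype_card, hs, ← Fintype.card_subtype]
    apply Fintype.card_congr
    exact Equiv.refl _
  have himg : s.image compl ⊆ t := by
    intro E' hE'
    rw [Finset.mem_image] at hE'
    obtain ⟨E, hE, rfl⟩ := hE'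
    rw [hs, Finset.mem_filter] at hE
    rw [ht, Finset.mem_filter]
    exact ⟨Finset.mem_univ _, hcompl E hE.2⟩
  have hst : s.card ≤ t.card := by
    calc s.card = (s.image compl).card :=
          (Finset.card_image_of_injective s compl_injective).symm
      _ ≤ t.card := Finset.card_le_card himg
  have htotal : t.card + s.card = 2 ^ N := by
    rw [ht, hs, Finset.card_filter_add_card_filter_not]
    rw [Finset.card_univ, Fintype.card_set, Fintype.card_fin]
  have hNpow : 2 ^ N = 2 * 2 ^ (N - 1) := by
    obtain ⟨M, rfl⟩ : ∃ M, N = M + 1 := ⟨N - 1, by omega⟩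
    simp [pow_succ]; ring
  have hbound : s.card ≤ 2 ^ (N - 1) := by omega
  constructor
  · rw [hcard]; exact hbound
  · rw [hcard]
    rw [div_le_div_iff₀ (by positivity) two_pos]
    have h1r : (s.card : ℝ) ≤ ((2 ^ (N - 1) : ℕ) : ℝ) := by exact_mod_cast hbound
    have h2r : (2 : ℝ) ^ N = 2 * ((2 ^ (N - 1) : ℕ) : ℝ) := by
      push_cast
      exact_mod_cast hNpow
    linarith
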